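/- Let k ≥ 1 and let m ≥ 3 be odd. Then the sum over all tuples (b_1,...,b_m) of vectors in F_2^k of (-1)^(b_1·b_2 + b_2·b_3 + ... + b_{m-1}·b_m + b_m·b_1) equals 0. -/

import Mathlib

open Finset

/-- Cyclic shift on `F_2^n`: `(shift x) i = x (i+1)`. -/
def shift (n : ℕ) (x : Fin n → ZMod 2) : Fin n → ZMod 2 := fun i => x (finRotate n i)

/-- Dot product on `F_2^n`. -/
def dot (n : ℕ) (x y : Fin n → ZMod 2) : ZMod 2 := ∑ i, x i * y i

/-- `(-1)^b` as an integer. -/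
def sgn (b : ZMod 2) : ℤ := if b = 0 then 1 else -1

lemma sgn_add_one (x : ZMod 2) : sgn (x + 1) = - sgn x := by
  revert x; decide

lemma dot_comm (n : ℕ) (x y : Fin n → ZMod 2) : dot n x y = dot n y x := by
  simp [dot, mul_comm]

lemma dot_bilin (n : ℕ) (x y v : Fin n → ZMod 2) :
    dot n (x + v) (y + v) = dot n x y + dot n x v + dot n v y + dot n v v := by
  simp only [dot, Pi.add_apply, mul_add, add_mul, Finset.sum_add_distrib]
  abel

/-- The cyclic character sum over tuples of `m` blocks with `m` odd vanishes. -/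
theorem cyclic_block_sum_odd (k m : ℕ) (hk : 1 ≤ k) (hm : 3 ≤ m) (hmo : Odd m) :
    (∑ b : Fin m → (Fin k → ZMod 2),
        sgn (∑ i : Fin m, dot k (b i) (b (i + ⟨1, by omega⟩)))) = 0 := by
  haveI : NeZero m := ⟨by omega⟩
  set v : Fin k → ZMod 2 := fun j => if j = ⟨0, by omega⟩ then 1 else 0 with hv
  have hvv : dot k v v = 1 := by
    simp [dot, hv, Finset.sum_ite_eq', mul_ite]
  set o : Fin m := ⟨1, by omega⟩
  set c : Fin m → Fin k → ZMod 2 := fun _ => v with hc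
  set f : (Fin m → Fin k → ZMod 2) → ℤ :=
    fun b => sgn (∑ i : Fin m, dot k (b i) (b (i + o))) with hf
  set S := (∑ b : Fin m → (Fin k → ZMod 2), f b) with hS
  have hflip : ∀ b : Fin m → Fin k → ZMod 2, f (b + c) = - f b := by
    intro b
    have hexp : (∑ i : Fin m, dot k ((b + c) i) ((b + c) (i + o)))
        = (∑ i : Fin m, dot k (b i) (b (i + o))) + 1 := by
      have h1 : ∀ i : Fin m, dot k ((b + c) i) ((b + c) (i + o))
          = dot k (b i) (b (i + o)) + dot k (b i) v + dot k v (b (i + o)) + dot k v v := by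
        intro i; exact dot_bilin k (b i) (b (i + o)) v
      simp only [h1]
      rw [Finset.sum_add_distrib, Finset.sum_add_distrib, Finset.sum_add_distrib]
      have h2 : (∑ i : Fin m, dot k v (b (i + o))) = ∑ i : Fin m, dot k (b i) v := by
        rw [← Equiv.sum_comp (Equiv.addRight o) (fun i => dot k (b i) v)]
        exact Finset.sum_congr rfl fun i _ => dot_comm k v (b (i + o))
      rw [h2]
      have h3 : (∑ _i : Fin m, dot k v v) = 1 := by
        rw [Finset.sum_const, hvv]
        simp only [Finset.card_univ, Fintype.card_fin, nsmul_eq_mul, mul_one]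
        rw [← ZMod.natCast_mod, Nat.odd_iff.mp hmo]
        rfl
      rw [h3]
      have h4 : (∑ i : Fin m, dot k (b i) v) + (∑ i : Fin m, dot k (b i) v) = 0 := by
        rw [← two_mul]
        have : (2 : ZMod 2) = 0 := by decide
        rw [this, zero_mul]
      rw [add_assoc, add_assoc, ← add_assoc (∑ i : Fin m, dot k (b i) v), h4, zero_add]
    rw [hf]
    simp only
    rw [hexp, sgn_add_one]
  have key : S = -S := by
    calc S = ∑ b : Fin m → Fin k → ZMod 2, f (b + c) :=
          (Equiv.sum_comp (Equiv.addRight c) f).symm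
      _ = ∑ b : Fin m → Fin k → ZMod 2, - f b := Finset.sum_congr rfl fun b _ => hflip b
      _ = -S := by rw [hS]; exact Finset.sum_neg_distrib f
  linarith [key]
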